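/- Let f be a mixing piecewise expanding unimodal map with C² branches, and let M be a constant such that ‖𝓛ⁿ(1)‖_∞ ≤ M for all n ≥ 0. Then for all positive integers k, i₁, …, i_k and positive integers m₁ > m₂ > … > m_k, and for all bounded functions h₁, …, h_k of bounded variation on [0,1], one has ‖𝔇^{i₁,…,i_k}_{m₁,…,m_k}(h₁,…,h_k)‖_∞ ≤ M^k λ^{−i₁ m₁} λ^{−i₂ m₂} ⋯ λ^{−i_k m_k} ‖h₁‖_∞ ‖h₂‖_∞ ⋯ ‖h_k‖_∞. -/

import Mathlib

open MeasureTheory Set Filter Topology Asymptotics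
open scoped ENNReal NNReal

/-- `BoundedVariationOn` on the unit interval. -/
def bvOn (φ : ℝ → ℝ) : Prop := BoundedVariationOn φ (Set.Icc 0 1)

/-- The supremum norm of `φ` over `[0,1]`. -/
noncomputable def supNorm (φ : ℝ → ℝ) : ℝ := ⨆ x : Set.Icc (0:ℝ) 1, |φ (x : ℝ)|

/-- The total variation of `φ` over `[0,1]`, as a real number. -/
noncomputable def var01 (φ : ℝ → ℝ) : ℝ := (eVariationOn φ (Set.Icc 0 1)).toReal

/-- The BV norm `‖φ‖_BV = ‖φ‖_∞ + var(φ)` on `[0,1]`. -/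
noncomputable def bvNorm (φ : ℝ → ℝ) : ℝ := supNorm φ + var01 φ

/-- The BV norm with values in `ℝ≥0∞` (no junk values). -/
noncomputable def eBVnorm (φ : ℝ → ℝ) : ℝ≥0∞ :=
  (⨆ x : Set.Icc (0:ℝ) 1, (‖φ (x : ℝ)‖₊ : ℝ≥0∞)) + eVariationOn φ (Set.Icc 0 1)

/-- The Heaviside-type function `H_a` with value `1` left of `a`, `1/2` at `a`, `0` right of `a`. -/
noncomputable def Hstep (a x : ℝ) : ℝ := if x < a then 1 else if x = a then 1/2 else 0

/-- A piecewise expanding unimodal map (PEUM) of `[0,1]`: a map `f` with critical point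
`c ∈ (0,1)` whose two branches `f₁` (on `[0, c+ε]`) and `f₂` (on `[c-ε, 1]`) are `C²` and
satisfy `|Df_j| ≥ λ > 1`. -/
structure PEUM where
  f : ℝ → ℝ
  c : ℝ
  eps : ℝ
  lam : ℝ
  f₁ : ℝ → ℝ
  f₂ : ℝ → ℝ
  mapsTo : Set.MapsTo f (Set.Icc (0:ℝ) 1) (Set.Icc (0:ℝ) 1)
  c_mem : c ∈ Set.Ioo (0:ℝ) 1
  eps_pos : 0 < eps
  lam_gt_one : 1 < lam
  smooth₁ : ContDiffOn ℝ 2 f₁ (Set.Icc 0 (c + eps))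
  smooth₂ : ContDiffOn ℝ 2 f₂ (Set.Icc (c - eps) 1)
  eq₁ : ∀ x ∈ Set.Icc (0:ℝ) 1, x ≤ c → f x = f₁ x
  eq₂ : ∀ x ∈ Set.Icc (0:ℝ) 1, c ≤ x → f x = f₂ x
  branch_eq : f₁ c = f₂ c
  expand₁ : ∀ x ∈ Set.Icc 0 (c + eps), lam ≤ |deriv f₁ x|
  expand₂ : ∀ x ∈ Set.Icc (c - eps) 1, lam ≤ |deriv f₂ x|

namespace PEUM

/-- Both branches of `P` are of class `C^r`. -/
def BranchSmooth (P : PEUM) (r : ℕ) : Prop :=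
  ContDiffOn ℝ r P.f₁ (Set.Icc 0 (P.c + P.eps)) ∧
  ContDiffOn ℝ r P.f₂ (Set.Icc (P.c - P.eps) 1)

/-- The weighted transfer operator `𝓛_m φ(x) = Σ_{f(y)=x} φ(y)/((Df(y))^m |Df(y)|)`,
the sum ranging over preimages `y ∈ [0,1]` of `x`. -/
noncomputable def transfer (P : PEUM) (m : ℕ) (φ : ℝ → ℝ) : ℝ → ℝ := fun x =>
  ∑' y : {y : ℝ // y ∈ Set.Icc (0:ℝ) 1 ∧ P.f y = x},
    φ y.1 / ((deriv P.f y.1) ^ m * |deriv P.f y.1|)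

/-- The Perron–Frobenius operator `𝓛 = 𝓛₀`. -/
noncomputable def PF (P : PEUM) : (ℝ → ℝ) → ℝ → ℝ := P.transfer 0

/-- `ξ(z) = D²f(z)/Df(z)`. -/
noncomputable def xi (P : PEUM) : ℝ → ℝ := fun z => deriv (deriv P.f) z / deriv P.f z

/-- The measure `ρ dx` on `[0,1]`. -/
noncomputable def invMeasure (P : PEUM) (ρ : ℝ → ℝ) : Measure ℝ :=
  (volume.restrict (Set.Icc (0:ℝ) 1)).withDensity fun x => ENNReal.ofReal (ρ x)

/-- `ρ` is the (BV representative of the) density of the absolutely continuous invariant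
probability measure of `P`: it is nonnegative, of bounded variation, `ρ dx` is an
`f`-invariant probability measure, and `𝓛ρ = ρ` on `[0,1]`. -/
def IsInvariantDensity (P : PEUM) (ρ : ℝ → ℝ) : Prop :=
  bvOn ρ ∧ (∀ x, 0 ≤ ρ x) ∧ IsProbabilityMeasure (P.invMeasure ρ) ∧
    (P.invMeasure ρ).map P.f = P.invMeasure ρ ∧
    ∀ x ∈ Set.Icc (0:ℝ) 1, P.PF ρ x = ρ x

/-- Exponential mixing at rate `θ < 1`:
`𝓛ⁿh = (∫₀¹ h) ρ + O(θⁿ ‖h‖_BV)` for all `h` of bounded variation. -/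
def Mixing (P : PEUM) (ρ : ℝ → ℝ) (θ : ℝ) : Prop :=
  0 < θ ∧ θ < 1 ∧ ∃ C : ℝ, 0 < C ∧ ∀ h : ℝ → ℝ, bvOn h → ∀ n : ℕ, ∀ x ∈ Set.Icc (0:ℝ) 1,
    |(P.PF)^[n] h x - (∫ z in Set.Icc (0:ℝ) 1, h z) * ρ x| ≤ C * θ ^ n * bvNorm h

/-- `ρ₁ = −Σ_{i=1}^∞ 𝓛₁^i(ξ·ρ)` (pointwise sum of the series). -/
noncomputable def rho1 (P : PEUM) (ρ : ℝ → ℝ) : ℝ → ℝ := fun x =>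
  -∑' i : ℕ, (P.transfer 1)^[i + 1] (fun y => P.xi y * ρ y) x

/-- The operator `𝔇^{i₁,…,i_k}_{m₁,…,m_k}(h₁,…,h_k)`, encoded on the list
`[(i₁,m₁,h₁),…,(i_k,m_k,h_k)]` by `𝔇((i,m,h) :: rest) = 𝓛_m^i (h · 𝔇(rest))`. -/
noncomputable def DD (P : PEUM) : List (ℕ × ℕ × (ℝ → ℝ)) → ℝ → ℝ
  | [] => fun _ => 1
  | p :: rest => (P.transfer p.2.1)^[p.1] fun x => p.2.2 x * P.DD rest x

/-- The set `𝒩_β` of points approached exponentially fast (at rate `β`) by the critical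
orbit: `|c_n − x| ≤ βⁿ` for infinitely many `n`. -/
def Nbeta (P : PEUM) (β : ℝ) : Set ℝ :=
  {x ∈ Set.Icc (0:ℝ) 1 | ∃ᶠ n in Filter.atTop, |P.f^[n] P.c - x| ≤ β ^ n}

end PEUM
section Aux

open Set

/-- Dichotomy for the derivative of a PEUM: at each point of `[0,1]` the derivative of `f`
is either `0` (junk value at non-differentiability points) or at least `λ` in absolute value. -/
lemma PEUM.deriv_cases (P : PEUM) : ∀ y ∈ Set.Icc (0:ℝ) 1,
    deriv P.f y = 0 ∨ P.lam ≤ |deriv P.f y| := by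
  intro y hy
  obtain ⟨hy0, hy1⟩ := hy
  have hc0 := P.c_mem.1
  have hc1 := P.c_mem.2
  have heps := P.eps_pos
  have hlam := P.lam_gt_one
  have hd1 : ∀ z ∈ Set.Icc 0 (P.c + P.eps), DifferentiableAt ℝ P.f₁ z := by
    intro z hz
    apply differentiableAt_of_deriv_ne_zero
    have h := P.expand₁ z hz
    intro h0; rw [h0, abs_zero] at h; linarith
  have hd2 : ∀ z ∈ Set.Icc (P.c - P.eps) 1, DifferentiableAt ℝ P.f₂ z := by
    intro z hz
    apply differentiableAt_of_deriv_ne_zero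
    have h := P.expand₂ z hz
    intro h0; rw [h0, abs_zero] at h; linarith
  have key : ∀ (g : ℝ → ℝ) (s : Set ℝ), (∀ z ∈ s, P.f z = g z) → y ∈ s →
      UniqueDiffWithinAt ℝ s y → DifferentiableAt ℝ g y →
      deriv P.f y = 0 ∨ deriv P.f y = deriv g y := by
    intro g s heq hys hu hg
    by_cases h0 : deriv P.f y = 0
    · exact Or.inl h0
    · right
      have hF : DifferentiableAt ℝ P.f y := differentiableAt_of_deriv_ne_zero h0
      have h1 : HasDerivWithinAt P.f (deriv g y) s y :=
        (hg.hasDerivAt.hasDerivWithinAt).congr heq (heq y hys)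
      have h2 : HasDerivWithinAt P.f (deriv P.f y) s y := hF.hasDerivAt.hasDerivWithinAt
      rw [← h2.derivWithin hu, h1.derivWithin hu]
  rcases eq_or_lt_of_le hy0 with h0 | h0pos
  · -- y = 0
    rcases key P.f₁ (Set.Icc 0 P.c)
        (fun z hz => P.eq₁ z ⟨hz.1, hz.2.trans hc1.le⟩ hz.2)
        (by rw [← h0]; exact Set.left_mem_Icc.mpr hc0.le)
        ((uniqueDiffOn_Icc hc0) y (by rw [← h0]; exact Set.left_mem_Icc.mpr hc0.le))
        (hd1 y ⟨hy0, by rw [← h0]; positivity⟩) with h | h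
    · exact Or.inl h
    · right; rw [h]; exact P.expand₁ y ⟨hy0, by rw [← h0]; positivity⟩
  · rcases lt_trichotomy y P.c with hyc | hyc | hyc
    · right
      have hmem : Set.Ioo (0:ℝ) P.c ∈ nhds y := Ioo_mem_nhds h0pos hyc
      have heq : P.f =ᶠ[nhds y] P.f₁ :=
        Filter.eventuallyEq_of_mem hmem
          (fun z hz => P.eq₁ z ⟨hz.1.le, hz.2.le.trans hc1.le⟩ hz.2.le)
      rw [heq.deriv_eq]
      exact P.expand₁ y ⟨h0pos.le, by linarith⟩
    · -- y = c
      rcases key P.f₁ (Set.Icc 0 P.c)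
          (fun z hz => P.eq₁ z ⟨hz.1, hz.2.trans hc1.le⟩ hz.2)
          (by rw [hyc]; exact Set.right_mem_Icc.mpr hc0.le)
          ((uniqueDiffOn_Icc hc0) y (by rw [hyc]; exact Set.right_mem_Icc.mpr hc0.le))
          (hd1 y ⟨hy0, by linarith⟩) with h | h
      · exact Or.inl h
      · right; rw [h]; exact P.expand₁ y ⟨hy0, by linarith⟩
    · rcases eq_or_lt_of_le hy1 with h1 | h1
      · -- y = 1
        rcases key P.f₂ (Set.Icc P.c 1)
            (fun z hz => P.eq₂ z ⟨hc0.le.trans hz.1, hz.2⟩ hz.1)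
            (by rw [h1]; exact Set.right_mem_Icc.mpr hc1.le)
            ((uniqueDiffOn_Icc hc1) y (by rw [h1]; exact Set.right_mem_Icc.mpr hc1.le))
            (hd2 y ⟨by linarith, hy1⟩) with h | h
        · exact Or.inl h
        · right; rw [h]; exact P.expand₂ y ⟨by linarith, hy1⟩
      · right
        have hmem : Set.Ioo P.c 1 ∈ nhds y := Ioo_mem_nhds hyc h1
        have heq : P.f =ᶠ[nhds y] P.f₂ :=
          Filter.eventuallyEq_of_mem hmem
            (fun z hz => P.eq₂ z ⟨hc0.le.trans hz.1.le, hz.2.le⟩ hz.1.le)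
        rw [heq.deriv_eq]
        exact P.expand₂ y ⟨by linarith, hy1⟩

/-- Each point has finitely many preimages in `[0,1]` under a PEUM. -/
lemma PEUM.preimage_finite (P : PEUM) (x : ℝ) :
    {y : ℝ | y ∈ Set.Icc (0:ℝ) 1 ∧ P.f y = x}.Finite := by
  have hc0 := P.c_mem.1
  have hc1 := P.c_mem.2
  have heps := P.eps_pos
  have hlam := P.lam_gt_one
  have inj : ∀ (g : ℝ → ℝ) (u v : ℝ), (∀ z ∈ Set.Icc u v, P.lam ≤ |deriv g z|) →
      Set.InjOn g (Set.Icc u v) := by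
    intro g u v hg
    have key : ∀ a b, a ∈ Set.Icc u v → b ∈ Set.Icc u v → a < b → g a = g b → False := by
      intro a b ha hb hab heq
      have hsub : Set.Icc a b ⊆ Set.Icc u v := Set.Icc_subset_Icc ha.1 hb.2
      have hdiff : ∀ z ∈ Set.Icc a b, DifferentiableAt ℝ g z := by
        intro z hz
        apply differentiableAt_of_deriv_ne_zero
        have h := hg z (hsub hz)
        intro h0; rw [h0, abs_zero] at h; linarith
      obtain ⟨ξ, hξ, hdξ⟩ := exists_deriv_eq_slope g hab
        (fun z hz => (hdiff z hz).continuousAt.continuousWithinAt)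
        (fun z hz => (hdiff z (Set.Ioo_subset_Icc_self hz)).differentiableWithinAt)
      rw [heq, sub_self, zero_div] at hdξ
      have h2 := hg ξ (hsub (Set.Ioo_subset_Icc_self hξ))
      rw [hdξ, abs_zero] at h2
      linarith
    intro a ha b hb heq
    by_contra hne
    rcases lt_or_gt_of_ne hne with h | h
    · exact key a b ha hb h heq
    · exact key b a hb ha h heq.symm
  have h1 : {y : ℝ | y ∈ Set.Icc 0 P.c ∧ P.f y = x}.Subsingleton := by
    intro a ha b hb
    simp only [Set.mem_setOf_eq] at ha hb
    have hmem : ∀ z, z ∈ Set.Icc (0:ℝ) P.c → z ∈ Set.Icc (0:ℝ) 1 :=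
      fun z hz => ⟨hz.1, hz.2.trans hc1.le⟩
    have hfa : P.f a = P.f₁ a := P.eq₁ a (hmem a ha.1) ha.1.2
    have hfb : P.f b = P.f₁ b := P.eq₁ b (hmem b hb.1) hb.1.2
    have hsub : Set.Icc (0:ℝ) P.c ⊆ Set.Icc 0 (P.c + P.eps) :=
      Set.Icc_subset_Icc_right (by linarith)
    exact inj P.f₁ 0 (P.c + P.eps) P.expand₁ (hsub ha.1) (hsub hb.1)
      (by rw [← hfa, ← hfb, ha.2, hb.2])
  have h2 : {y : ℝ | y ∈ Set.Icc P.c 1 ∧ P.f y = x}.Subsingleton := by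
    intro a ha b hb
    simp only [Set.mem_setOf_eq] at ha hb
    have hmem : ∀ z, z ∈ Set.Icc P.c (1:ℝ) → z ∈ Set.Icc (0:ℝ) 1 :=
      fun z hz => ⟨hc0.le.trans hz.1, hz.2⟩
    have hfa : P.f a = P.f₂ a := P.eq₂ a (hmem a ha.1) ha.1.1
    have hfb : P.f b = P.f₂ b := P.eq₂ b (hmem b hb.1) hb.1.1
    have hsub : Set.Icc P.c (1:ℝ) ⊆ Set.Icc (P.c - P.eps) 1 :=
      Set.Icc_subset_Icc_left (by linarith)
    exact inj P.f₂ (P.c - P.eps) 1 P.expand₂ (hsub ha.1) (hsub hb.1)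
      (by rw [← hfa, ← hfb, ha.2, hb.2])
  apply Set.Finite.subset (h1.finite.union h2.finite)
  intro y hy
  simp only [Set.mem_setOf_eq, Set.mem_union] at hy ⊢
  rcases le_total y P.c with h | h
  · exact Or.inl ⟨⟨hy.1.1, h⟩, hy.2⟩
  · exact Or.inr ⟨⟨h, hy.1.2⟩, hy.2⟩

/-- `𝓛₀` of a nonnegative function is nonnegative. -/
lemma PEUM.transfer_nonneg (P : PEUM) (g : ℝ → ℝ)
    (hg : ∀ y ∈ Set.Icc (0:ℝ) 1, 0 ≤ g y) (x : ℝ) : 0 ≤ P.transfer 0 g x := by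
  classical
  haveI : Finite {y : ℝ // y ∈ Set.Icc (0:ℝ) 1 ∧ P.f y = x} := (P.preimage_finite x).to_subtype
  haveI : Fintype {y : ℝ // y ∈ Set.Icc (0:ℝ) 1 ∧ P.f y = x} := Fintype.ofFinite _
  simp only [PEUM.transfer]
  rw [tsum_fintype]
  apply Finset.sum_nonneg
  rintro ⟨y, hy, hfy⟩ -
  simp only [pow_zero, one_mul]
  exact div_nonneg (hg y hy) (abs_nonneg _)

/-- Linearity of `𝓛₀` in a constant factor. -/
lemma PEUM.transfer_const_mul (P : PEUM) (C : ℝ) (g : ℝ → ℝ) (x : ℝ) :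
    P.transfer 0 (fun y => C * g y) x = C * P.transfer 0 g x := by
  classical
  haveI : Finite {y : ℝ // y ∈ Set.Icc (0:ℝ) 1 ∧ P.f y = x} := (P.preimage_finite x).to_subtype
  haveI : Fintype {y : ℝ // y ∈ Set.Icc (0:ℝ) 1 ∧ P.f y = x} := Fintype.ofFinite _
  simp only [PEUM.transfer]
  rw [tsum_fintype, tsum_fintype, Finset.mul_sum]
  exact Finset.sum_congr rfl (fun y _ => mul_div_assoc _ _ _)

/-- Pointwise comparison `|𝓛_m φ| ≤ λ^{-m} 𝓛₀ ψ` whenever `|φ| ≤ ψ` on `[0,1]`. -/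
lemma PEUM.transfer_abs_le (P : PEUM) (m : ℕ) (φ ψ : ℝ → ℝ)
    (hψ : ∀ y ∈ Set.Icc (0:ℝ) 1, 0 ≤ ψ y)
    (hφψ : ∀ y ∈ Set.Icc (0:ℝ) 1, |φ y| ≤ ψ y) (x : ℝ) :
    |P.transfer m φ x| ≤ (P.lam ^ m)⁻¹ * P.transfer 0 ψ x := by
  classical
  have hlam := P.lam_gt_one
  haveI : Finite {y : ℝ // y ∈ Set.Icc (0:ℝ) 1 ∧ P.f y = x} := (P.preimage_finite x).to_subtype
  haveI : Fintype {y : ℝ // y ∈ Set.Icc (0:ℝ) 1 ∧ P.f y = x} := Fintype.ofFinite _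
  simp only [PEUM.transfer]
  rw [tsum_fintype, tsum_fintype, Finset.mul_sum]
  refine le_trans (Finset.abs_sum_le_sum_abs _ _) (Finset.sum_le_sum ?_)
  rintro ⟨y, hy, hfy⟩ -
  simp only [pow_zero, one_mul]
  rcases P.deriv_cases y hy with h0 | hge
  · rw [h0]
    simp
  · have hd0 : (0:ℝ) < |deriv P.f y| := lt_of_lt_of_le (by linarith) hge
    have hlp : (0:ℝ) < P.lam ^ m := pow_pos (by linarith) m
    rw [abs_div, abs_mul, abs_pow, abs_abs]
    have h1 : |φ y| / (|deriv P.f y| ^ m * |deriv P.f y|) ≤ ψ y / (P.lam ^ m * |deriv P.f y|) := by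
      apply div_le_div₀ (hψ y hy) (hφψ y hy) (by positivity)
      exact mul_le_mul_of_nonneg_right (pow_le_pow_left₀ (by linarith) hge m) hd0.le
    refine h1.trans (le_of_eq ?_)
    have hd' : |deriv P.f y| ≠ 0 := ne_of_gt hd0
    have hl' : P.lam ^ m ≠ 0 := ne_of_gt hlp
    field_simp

/-- Iterates of the Perron–Frobenius operator on `1` are nonnegative. -/
lemma PEUM.pf_iter_nonneg (P : PEUM) (i : ℕ) : ∀ x, 0 ≤ (P.PF)^[i] (fun _ => (1:ℝ)) x := by
  induction i with
  | zero => intro x; simp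
  | succ i ih =>
    intro x
    rw [Function.iterate_succ_apply']
    exact P.transfer_nonneg _ (fun y _ => ih y) x

/-- Main iterated bound: `|𝓛_m^i φ| ≤ λ^{-mi} B 𝓛^i 1` on `[0,1]` when `|φ| ≤ B` on `[0,1]`. -/
lemma PEUM.iter_bound (P : PEUM) (m i : ℕ) (φ : ℝ → ℝ) (B : ℝ) (hB : 0 ≤ B)
    (hφ : ∀ y ∈ Set.Icc (0:ℝ) 1, |φ y| ≤ B) :
    ∀ x ∈ Set.Icc (0:ℝ) 1,
      |(P.transfer m)^[i] φ x| ≤ ((P.lam ^ m)⁻¹) ^ i * B * ((P.PF)^[i] (fun _ => (1:ℝ)) x) := by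
  have hlam := P.lam_gt_one
  have hlp : (0:ℝ) < P.lam ^ m := pow_pos (by linarith) m
  induction i with
  | zero =>
    intro x hx
    simpa using hφ x hx
  | succ i ih =>
    intro x hx
    rw [Function.iterate_succ_apply']
    have hC : 0 ≤ ((P.lam ^ m)⁻¹) ^ i * B := mul_nonneg (by positivity) hB
    have h1 := P.transfer_abs_le m ((P.transfer m)^[i] φ)
      (fun y => (((P.lam ^ m)⁻¹) ^ i * B) * ((P.PF)^[i] (fun _ => (1:ℝ)) y))
      (fun y _ => mul_nonneg hC (P.pf_iter_nonneg i y))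
      (fun y hy => by
        have := ih y hy
        simpa [mul_assoc] using this) x
    rw [P.transfer_const_mul] at h1
    have h2 : P.transfer 0 ((P.PF)^[i] (fun _ => (1:ℝ))) x
        = (P.PF)^[i + 1] (fun _ => (1:ℝ)) x :=
      (congrFun (Function.iterate_succ_apply' P.PF i (fun _ => (1:ℝ))) x).symm
    rw [h2] at h1
    refine h1.trans (le_of_eq ?_)
    ring

end Aux

/-- Proposition 2.6(a). For a mixing PEUM, if `‖𝓛ⁿ1‖_∞ ≤ M` for all `n`,
then for all `i₁,…,i_k ≥ 1`, `m₁ > ⋯ > m_k ≥ 1` and bounded BV functions `h₁,…,h_k`,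
`‖𝔇^{i₁,…,i_k}_{m₁,…,m_k}(h₁,…,h_k)‖_∞ ≤ M^k λ^{−i₁m₁} ⋯ λ^{−i_km_k} ‖h₁‖_∞ ⋯ ‖h_k‖_∞`. -/
theorem Dop_sup_bound (P : PEUM) (ρ : ℝ → ℝ) (θ : ℝ)
    (hρ : P.IsInvariantDensity ρ) (hmix : P.Mixing ρ θ) (M : ℝ)
    (hM : ∀ n : ℕ, ∀ x ∈ Set.Icc (0:ℝ) 1, |(P.PF)^[n] (fun _ => (1:ℝ)) x| ≤ M) :
    ∀ l : List (ℕ × ℕ × (ℝ → ℝ)), l ≠ [] →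
      (∀ p ∈ l, 1 ≤ p.1 ∧ 1 ≤ p.2.1) →
      l.Chain' (fun p q => q.2.1 < p.2.1) →
      (∀ p ∈ l, bvOn p.2.2 ∧ ∃ B : ℝ, ∀ x ∈ Set.Icc (0:ℝ) 1, |p.2.2 x| ≤ B) →
      ∀ x ∈ Set.Icc (0:ℝ) 1,
        |P.DD l x| ≤ M ^ l.length * (l.map fun p => ((P.lam ^ (p.1 * p.2.1) : ℝ))⁻¹).prod *
          (l.map fun p => supNorm p.2.2).prod := by
  intro l hne hge hch hbv x hx
  clear hne hge hch
  have h0mem : (0:ℝ) ∈ Set.Icc (0:ℝ) 1 := Set.mem_Icc.mpr ⟨le_refl 0, zero_le_one⟩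
  have hM1 : (1:ℝ) ≤ M := by simpa using hM 0 0 h0mem
  have hlam := P.lam_gt_one
  clear hρ hmix
  revert hbv x hx
  induction l with
  | nil => intro hbv x hx; simp [PEUM.DD]
  | cons p rest ih =>
    intro hbv x hx
    have hIH : ∀ y ∈ Set.Icc (0:ℝ) 1, |P.DD rest y| ≤
        M ^ rest.length * (rest.map fun p => ((P.lam ^ (p.1 * p.2.1) : ℝ))⁻¹).prod *
          (rest.map fun p => supNorm p.2.2).prod := by
      intro y hy
      exact ih (fun q hq => hbv q (List.mem_cons_of_mem _ hq)) y hy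
    set R : ℝ := M ^ rest.length * (rest.map fun p => ((P.lam ^ (p.1 * p.2.1) : ℝ))⁻¹).prod *
      (rest.map fun p => supNorm p.2.2).prod with hRdef
    have hR0 : 0 ≤ R := by
      apply mul_nonneg (mul_nonneg (pow_nonneg (by linarith) _) ?_) ?_
      · apply List.prod_nonneg
        intro a ha
        simp only [List.mem_map] at ha
        obtain ⟨q, -, rfl⟩ := ha
        positivity
      · apply List.prod_nonneg
        intro a ha
        simp only [List.mem_map] at ha
        obtain ⟨q, hq, rfl⟩ := ha
        obtain ⟨B, hB⟩ := (hbv q (List.mem_cons_of_mem _ hq)).2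
        have hbdd : BddAbove (Set.range fun z : Set.Icc (0:ℝ) 1 => |q.2.2 (z : ℝ)|) := by
          refine ⟨max B 0, ?_⟩
          rintro v ⟨z, rfl⟩
          exact le_max_of_le_left (hB z z.2)
        exact le_trans (abs_nonneg _) (le_ciSup hbdd ⟨0, h0mem⟩)
    obtain ⟨B, hB⟩ := (hbv p List.mem_cons_self).2
    have hbdd : BddAbove (Set.range fun z : Set.Icc (0:ℝ) 1 => |p.2.2 (z : ℝ)|) := by
      refine ⟨max B 0, ?_⟩
      rintro v ⟨z, rfl⟩
      exact le_max_of_le_left (hB z z.2)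
    have hsup : ∀ y ∈ Set.Icc (0:ℝ) 1, |p.2.2 y| ≤ supNorm p.2.2 := by
      intro y hy
      exact le_ciSup hbdd (⟨y, hy⟩ : Set.Icc (0:ℝ) 1)
    have hsup0 : 0 ≤ supNorm p.2.2 := le_trans (abs_nonneg _) (hsup 0 h0mem)
    have hinner : ∀ y ∈ Set.Icc (0:ℝ) 1, |p.2.2 y * P.DD rest y| ≤ supNorm p.2.2 * R := by
      intro y hy
      rw [abs_mul]
      exact mul_le_mul (hsup y hy) (hIH y hy) (abs_nonneg _) hsup0
    have hdd : P.DD (p :: rest) x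
        = (P.transfer p.2.1)^[p.1] (fun y => p.2.2 y * P.DD rest y) x := rfl
    have h1 := P.iter_bound p.2.1 p.1 (fun y => p.2.2 y * P.DD rest y)
      (supNorm p.2.2 * R) (mul_nonneg hsup0 hR0) hinner x hx
    have hpf : (P.PF)^[p.1] (fun _ => (1:ℝ)) x ≤ M :=
      le_trans (le_abs_self _) (hM p.1 x hx)
    have hcoef : 0 ≤ ((P.lam ^ p.2.1)⁻¹) ^ p.1 * (supNorm p.2.2 * R) := by
      apply mul_nonneg _ (mul_nonneg hsup0 hR0)
      positivity
    rw [hdd]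
    calc |(P.transfer p.2.1)^[p.1] (fun y => p.2.2 y * P.DD rest y) x|
        ≤ ((P.lam ^ p.2.1)⁻¹) ^ p.1 * (supNorm p.2.2 * R)
            * ((P.PF)^[p.1] (fun _ => (1:ℝ)) x) := h1
      _ ≤ ((P.lam ^ p.2.1)⁻¹) ^ p.1 * (supNorm p.2.2 * R) * M :=
          mul_le_mul_of_nonneg_left hpf hcoef
      _ = M ^ (p :: rest).length *
            ((p :: rest).map fun p => ((P.lam ^ (p.1 * p.2.1) : ℝ))⁻¹).prod *
            ((p :: rest).map fun p => supNorm p.2.2).prod := by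
          simp only [List.length_cons, List.map_cons, List.prod_cons, hRdef]
          rw [← inv_pow, ← pow_mul, mul_comm p.2.1 p.1]
          ring
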